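/- Let n ≥ 2 be a natural number and let M be any closed subspace of L¹(0,1) with codimension < n. Then sup{‖Vf‖_∞ : f ∈ M, ‖f‖₁ ≤ 1} ≥ 1/2. (Consequently the n-th Gelfand number of V satisfies c_n(V) ≥ 1/2.) -/

import Mathlib

open MeasureTheory

noncomputable section

/-- The space `L¹(0,1)` of Lebesgue integrable functions on `(0,1)`. -/
abbrev L1 : Type := Lp ℝ 1 ((volume : Measure ℝ).restrict (Set.Ioo (0:ℝ) 1))

/-- The space `C[0,1]` of continuous real functions on `[0,1]` with the supremum norm. -/
abbrev C01 : Type := C(Set.Icc (0:ℝ) 1, ℝ)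

/-- `V` is the Volterra operator: `(V f)(t) = ∫₀ᵗ f(s) ds` for `f ∈ L¹(0,1)`. -/
def IsVolterra (V : L1 →L[ℝ] C01) : Prop :=
  ∀ f : L1, ∀ t : Set.Icc (0:ℝ) 1,
    V f t = ∫ s in Set.Ioo (0:ℝ) (t:ℝ), f s
      ∂((volume : Measure ℝ).restrict (Set.Ioo (0:ℝ) 1))

namespace GLBVolterra

/-- The underlying measure. -/
abbrev mu : Measure ℝ := (volume : Measure ℝ).restrict (Set.Ioo (0:ℝ) 1)

lemma volterra_norm_le (V : L1 →L[ℝ] C01) (hV : IsVolterra V) (f : L1) :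
    ‖V f‖ ≤ ‖f‖ := by
  refine (ContinuousMap.norm_le _ (norm_nonneg f)).mpr (fun t => ?_)
  rw [hV f t]
  calc ‖∫ s in Set.Ioo (0:ℝ) (t:ℝ), f s ∂mu‖
      ≤ ∫ s in Set.Ioo (0:ℝ) (t:ℝ), ‖f s‖ ∂mu := norm_integral_le_integral_norm _
    _ ≤ ∫ s, ‖f s‖ ∂mu := by
        refine setIntegral_le_integral (L1.integrable_coeFn f).norm ?_
        exact Filter.Eventually.of_forall fun x => norm_nonneg _
    _ = ‖f‖ := (L1.norm_eq_integral_norm f).symm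

/-- Left endpoints of the dyadic intervals. -/
def Ak (k : ℕ) : ℝ := 1 - (1/2:ℝ)^k

lemma Ak_nonneg (k : ℕ) : 0 ≤ Ak k := by
  have h1 : (1/2:ℝ)^k ≤ 1 := pow_le_one₀ (by norm_num) (by norm_num)
  simp only [Ak]; linarith

lemma Ak_lt_one (k : ℕ) : Ak k < 1 := by
  have : (0:ℝ) < (1/2:ℝ)^k := by positivity
  simp only [Ak]; linarith

lemma Ak_mono {i j : ℕ} (h : i ≤ j) : Ak i ≤ Ak j := by
  have := pow_le_pow_of_le_one (by norm_num : (0:ℝ) ≤ 1/2) (by norm_num) h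
  simp only [Ak]; linarith

lemma Ak_succ_sub (k : ℕ) : Ak (k+1) - Ak k = (1/2:ℝ)^(k+1) := by
  simp only [Ak, pow_succ]; ring

/-- The dyadic interval `(1 - 2⁻ᵏ, 1 - 2⁻ᵏ⁻¹)`. -/
def Jset (k : ℕ) : Set ℝ := Set.Ioo (Ak k) (Ak (k+1))

lemma Jset_subset (k : ℕ) : Jset k ⊆ Set.Ioo (0:ℝ) 1 := by
  intro x hx
  exact ⟨lt_of_le_of_lt (Ak_nonneg k) hx.1, lt_trans hx.2 (Ak_lt_one (k+1))⟩

lemma meas_Jset (k : ℕ) :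
    (volume : Measure ℝ).restrict (Set.Ioo (0:ℝ) 1) (Set.Ioo (Ak k) (Ak (k+1)))
      = ENNReal.ofReal ((1/2:ℝ)^(k+1)) := by
  have hsub : Set.Ioo (Ak k) (Ak (k+1)) ⊆ Set.Ioo (0:ℝ) 1 := Jset_subset k
  rw [Measure.restrict_apply measurableSet_Ioo,
    Set.inter_eq_self_of_subset_left hsub, Real.volume_Ioo, Ak_succ_sub]

lemma meas_Jset' (k : ℕ) : mu (Jset k) = ENNReal.ofReal ((1/2:ℝ)^(k+1)) := meas_Jset k

lemma meas_Jset_ne_top (k : ℕ) : mu (Jset k) ≠ ⊤ := by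
  rw [meas_Jset']; exact ENNReal.ofReal_ne_top

/-- The normalized indicator bump of the `k`-th dyadic interval. -/
def u (k : ℕ) : L1 :=
  indicatorConstLp 1 (measurableSet_Ioo : MeasurableSet (Jset k))
    (by rw [meas_Jset]; exact ENNReal.ofReal_ne_top)
    ((2:ℝ)^(k+1))

lemma norm_u (k : ℕ) : ‖u k‖ = 1 := by
  rw [u, norm_indicatorConstLp one_ne_zero ENNReal.one_ne_top, measureReal_def, meas_Jset,
    ENNReal.toReal_ofReal (by positivity)]
  simp only [ENNReal.toReal_one, div_one, Real.rpow_one, Real.norm_eq_abs]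
  rw [abs_of_pos (by positivity), ← mul_pow]
  norm_num

/-- The evaluation point: right endpoint of the `i`-th dyadic interval. -/
def tp (i : ℕ) : Set.Icc (0:ℝ) 1 := ⟨Ak (i+1), Ak_nonneg (i+1), le_of_lt (Ak_lt_one (i+1))⟩

lemma V_u_eval (V : L1 →L[ℝ] C01) (hV : IsVolterra V) (k : ℕ) (t : Set.Icc (0:ℝ) 1) :
    V (u k) t
      = ((volume : Measure ℝ).restrict (Set.Ioo (0:ℝ) 1)
          (Set.Ioo (Ak k) (Ak (k+1)) ∩ Set.Ioo (0:ℝ) (t:ℝ))).toReal * (2:ℝ)^(k+1) := by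
  rw [hV (u k) t, u, setIntegral_indicatorConstLp measurableSet_Ioo, smul_eq_mul, measureReal_def]

lemma V_u_self (V : L1 →L[ℝ] C01) (hV : IsVolterra V) (i : ℕ) :
    V (u i) (tp i) = 1 := by
  rw [V_u_eval V hV]
  have hsub : Set.Ioo (Ak i) (Ak (i+1)) ⊆ Set.Ioo (0:ℝ) ((tp i : ℝ)) := by
    intro x hx
    exact ⟨lt_of_le_of_lt (Ak_nonneg i) hx.1, hx.2⟩
  rw [Set.inter_eq_self_of_subset_left hsub, meas_Jset,
    ENNReal.toReal_ofReal (by positivity), ← mul_pow]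
  norm_num

lemma V_u_later (V : L1 →L[ℝ] C01) (hV : IsVolterra V) {i j : ℕ} (h : i + 1 ≤ j) :
    V (u j) (tp i) = 0 := by
  rw [V_u_eval V hV]
  have hempty : Set.Ioo (Ak j) (Ak (j+1)) ∩ Set.Ioo (0:ℝ) ((tp i : ℝ)) = ∅ := by
    rw [Set.eq_empty_iff_forall_notMem]
    rintro x ⟨hx1, hx2⟩
    have h1 : Ak (i+1) ≤ Ak j := Ak_mono h
    have h2 : Ak j < x := hx1.1
    have h3 : x < Ak (i+1) := hx2.2
    linarith
  rw [hempty]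
  simp

end GLBVolterra

set_option maxHeartbeats 1000000 in
set_option synthInstance.maxHeartbeats 200000 in
open GLBVolterra in
/-- Lower bound for the Gelfand numbers of the Volterra operator: for any closed subspace
`M ⊆ L¹(0,1)` of codimension `< n` (`n ≥ 2`), `sup {‖Vf‖_∞ : f ∈ M, ‖f‖₁ ≤ 1} ≥ 1/2`. -/
theorem gelfand_lower_bound_volterra (n : ℕ) (hn : 2 ≤ n)
    (V : L1 →L[ℝ] C01) (hV : IsVolterra V)
    (M : Submodule ℝ L1) (hMclosed : IsClosed (M : Set L1))
    (hM : Module.rank ℝ (L1 ⧸ M) < (n : Cardinal)) :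
    1 / 2 ≤ sSup {s : ℝ | ∃ f : L1, f ∈ M ∧ ‖f‖ ≤ 1 ∧ s = ‖V f‖} := by
  classical
  haveI : IsClosed (M : Set L1) := hMclosed
  set S := {s : ℝ | ∃ f : L1, f ∈ M ∧ ‖f‖ ≤ 1 ∧ s = ‖V f‖} with hSdef
  have hbdd : BddAbove S := by
    refine ⟨1, ?_⟩
    rintro s ⟨f, _, hf1, rfl⟩
    exact le_trans (volterra_norm_le V hV f) hf1
  haveI hfree : Module.Free ℝ (L1 ⧸ M) := Module.Free.of_divisionRing ℝ (L1 ⧸ M)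
  haveI hfd : FiniteDimensional ℝ (L1 ⧸ M) :=
    Module.rank_lt_aleph0_iff.mp (lt_trans hM (Cardinal.nat_lt_aleph0 n))
  -- a bounded right inverse of the quotient map
  let b := Module.finBasis ℝ (L1 ⧸ M)
  have hsurj := M.mkQ_surjective
  let w : Fin (Module.finrank ℝ (L1 ⧸ M)) → L1 := fun i => (hsurj (b i)).choose
  have hw : ∀ i, M.mkQ (w i) = b i := fun i => (hsurj (b i)).choose_spec
  let T : (L1 ⧸ M) →ₗ[ℝ] L1 := b.constr ℝ w
  have hqT : ∀ z, M.mkQ (T z) = z := by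
    have heq : M.mkQ.comp T = LinearMap.id := by
      refine b.ext fun i => ?_
      simp only [LinearMap.comp_apply, T, Module.Basis.constr_basis, LinearMap.id_apply]
      exact hw i
    intro z
    have := LinearMap.congr_fun heq z
    simpa using this
  have hTcont : Continuous T := T.continuous_of_finiteDimensional
  let Tc : (L1 ⧸ M) →L[ℝ] L1 := ⟨T, hTcont⟩
  set C : ℝ := ‖Tc‖ + 1 with hCdef
  have hC0 : 0 < C := by positivity
  -- the sequence of bumps in the quotient, and a convergent subsequence
  let y : ℕ → (L1 ⧸ M) := fun k => M.mkQ (u k)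
  have hymem : ∀ k, y k ∈ Metric.closedBall (0 : L1 ⧸ M) 1 := by
    intro k
    rw [Metric.mem_closedBall, dist_zero_right]
    calc ‖y k‖ ≤ ‖u k‖ := Submodule.Quotient.norm_mk_le _ _
      _ = 1 := norm_u k
  obtain ⟨v, -, φ, hφ, hconv⟩ :=
    (isCompact_closedBall (0 : L1 ⧸ M) 1).tendsto_subseq hymem
  -- the key estimate
  have key : ∀ δ : ℝ, 0 < δ → ∃ s ∈ S, 1/2 - δ ≤ s := by
    intro δ hδ
    obtain ⟨N, hN⟩ := (Metric.tendsto_atTop.mp hconv) (δ / (2*C)) (by positivity)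
    set i := φ N with hidef
    set j := φ (N+1) with hjdef
    have hij : i + 1 ≤ j := Nat.succ_le_of_lt (hφ (Nat.lt_succ_self N))
    have hyij : ‖y i - y j‖ ≤ δ / C := by
      have h1 := hN N (le_refl N)
      have h2 := hN (N+1) (Nat.le_succ N)
      simp only [Function.comp_apply] at h1 h2
      calc ‖y i - y j‖ = dist (y i) (y j) := (dist_eq_norm _ _).symm
        _ ≤ dist (y i) v + dist (y j) v := dist_triangle_right _ _ _
        _ ≤ δ / (2*C) + δ / (2*C) := by
            exact add_le_add h1.le h2.le
        _ = δ / C := by field_simp; ring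
    set f0 : L1 := u i - u j with hf0def
    set wv : L1 := Tc (y i - y j) with hwvdef
    have hwv : ‖wv‖ ≤ δ := by
      calc ‖wv‖ ≤ ‖Tc‖ * ‖y i - y j‖ := Tc.le_opNorm _
        _ ≤ C * (δ / C) := by
            refine mul_le_mul (by rw [hCdef]; linarith) hyij (norm_nonneg _) hC0.le
        _ = δ := by field_simp
    set f : L1 := f0 - wv with hfdef
    have hfM : f ∈ M := by
      have hq0 : M.mkQ f = 0 := by
        have h1 : M.mkQ f0 = y i - y j := by
          simp only [hf0def, map_sub, y]
        have h2 : M.mkQ wv = y i - y j := hqT (y i - y j)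
        rw [hfdef, map_sub, h1, h2, sub_self]
      have := LinearMap.mem_ker.mpr hq0
      rwa [Submodule.ker_mkQ] at this
    have hVf0 : V f0 (tp i) = 1 := by
      have : V f0 = V (u i) - V (u j) := by rw [hf0def, map_sub]
      rw [this, ContinuousMap.sub_apply, V_u_self V hV i, V_u_later V hV hij, sub_zero]
    have hVwt : V wv (tp i) ≤ δ := by
      calc V wv (tp i) ≤ |V wv (tp i)| := le_abs_self _
        _ ≤ ‖V wv‖ := by
            rw [← Real.norm_eq_abs]
            exact ContinuousMap.norm_coe_le_norm _ _
        _ ≤ ‖wv‖ := volterra_norm_le V hV wv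
        _ ≤ δ := hwv
    have hVflb : 1 - δ ≤ ‖V f‖ := by
      have hval : V f (tp i) = 1 - V wv (tp i) := by
        rw [hfdef, map_sub, ContinuousMap.sub_apply, hVf0]
      calc 1 - δ ≤ V f (tp i) := by rw [hval]; linarith
        _ ≤ |V f (tp i)| := le_abs_self _
        _ ≤ ‖V f‖ := by
            rw [← Real.norm_eq_abs]
            exact ContinuousMap.norm_coe_le_norm _ _
    have h2δ : (0:ℝ) < 2 + δ := by linarith
    have hfnorm : ‖f‖ ≤ 2 + δ := by
      calc ‖f‖ ≤ ‖f0‖ + ‖wv‖ := norm_sub_le _ _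
        _ ≤ (‖u i‖ + ‖u j‖) + δ := add_le_add (norm_sub_le _ _) hwv
        _ = 2 + δ := by rw [norm_u, norm_u]; ring
    set g : L1 := (2+δ)⁻¹ • f with hgdef
    have hgM : g ∈ M := M.smul_mem _ hfM
    have hgnorm : ‖g‖ ≤ 1 := by
      rw [hgdef, norm_smul, Real.norm_eq_abs, abs_of_pos (inv_pos.mpr h2δ)]
      rw [inv_mul_le_iff₀ h2δ]
      linarith
    refine ⟨‖V g‖, ⟨g, hgM, hgnorm, rfl⟩, ?_⟩
    have hVg : ‖V g‖ = (2+δ)⁻¹ * ‖V f‖ := by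
      rw [hgdef, V.map_smul, norm_smul, Real.norm_eq_abs, abs_of_pos (inv_pos.mpr h2δ)]
    rw [hVg]
    calc 1/2 - δ ≤ (1-δ) / (2+δ) := by
          rw [le_div_iff₀ h2δ]; nlinarith
      _ ≤ (2+δ)⁻¹ * ‖V f‖ := by
          rw [div_eq_inv_mul]
          exact mul_le_mul_of_nonneg_left hVflb (inv_nonneg.mpr h2δ.le)
  refine le_of_forall_sub_le ?_
  intro ε hε
  obtain ⟨s, hsS, hs⟩ := key ε hε
  exact le_trans hs (le_csSup hbdd hsS)
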